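/- Let Z_k = E₁ + … + E_k be the sum of k i.i.d. Exp(1) random variables, let γ > 0, and let Ψ(x) = 2^{{log₂ x}} (so Ψ(x)/x = 2^{-⌊log₂ x⌋}). Then for every integer k ≥ 1, P{Ψ(Z_k/γ)/Z_k > x} ~ (1/k!)·2^{k·{log₂(γx)}}·x^{-k} as x → ∞. -/

import Mathlib

open MeasureTheory ProbabilityTheory Filter Topology Set
open scoped ENNReal

-- Step 1: gamma measure of Ioo 0 b as a real integral
lemma aux_gamma_int (k : ℕ) (hk : 1 ≤ k) {b : ℝ} (hb : 0 < b) :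
    ((gammaMeasure k 1) (Ioo 0 b)).toReal
      = ∫ t in Ioo 0 b, gammaPDFReal k 1 t := by
  have hk0 : (0:ℝ) < (k:ℝ) := by exact_mod_cast hk
  rw [gammaMeasure, withDensity_apply _ measurableSet_Ioo]
  rw [integral_eq_lintegral_of_nonneg_ae
    (ae_of_all _ fun t => gammaPDFReal_nonneg hk0 one_pos t)
    (measurable_gammaPDFReal _ _).aestronglyMeasurable.restrict]
  rfl

-- Step 2: identify the pdf on positives
lemma aux_pdf_eq (k : ℕ) (hk : 1 ≤ k) {t : ℝ} (ht : 0 ≤ t) :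
    gammaPDFReal k 1 t = t ^ ((k:ℝ) - 1) * Real.exp (-t) / (Nat.factorial (k-1) : ℝ) := by
  have : ((k:ℝ)) = ((k - 1 : ℕ) : ℝ) + 1 := by
    have h := Nat.succ_pred_eq_of_pos hk
    exact_mod_cast (congrArg (Nat.cast : ℕ → ℝ) h).symm
  rw [gammaPDFReal, if_pos ht, Real.one_rpow, this, Real.Gamma_nat_eq_factorial]
  ring_nf

-- Step 3: two-sided bounds on the gamma measure of Ioo 0 b
lemma aux_bounds (k : ℕ) (hk : 1 ≤ k) {b : ℝ} (hb : 0 < b) :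
    Real.exp (-b) * (b ^ (k:ℝ) / (Nat.factorial k : ℝ))
        ≤ ((gammaMeasure k 1) (Ioo 0 b)).toReal ∧
    ((gammaMeasure k 1) (Ioo 0 b)).toReal ≤ b ^ (k:ℝ) / (Nat.factorial k : ℝ) := by
  have hkR : (1:ℝ) ≤ (k:ℝ) := by exact_mod_cast hk
  have hexp : -1 < (k:ℝ) - 1 := by linarith
  have hfac : (Nat.factorial k : ℝ) = (k:ℝ) * (Nat.factorial (k-1) : ℝ) := by
    exact_mod_cast (Nat.mul_factorial_pred (by omega : k ≠ 0)).symm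
  -- ∫ t^{k-1} over Ioo 0 b
  have hintpow : ∫ t in Ioo 0 b, t ^ ((k:ℝ) - 1) = b ^ (k:ℝ) / (k:ℝ) := by
    rw [← integral_Ioc_eq_integral_Ioo, ← intervalIntegral.integral_of_le hb.le,
      integral_rpow (Or.inl hexp), sub_add_cancel,
      Real.zero_rpow (by positivity), sub_zero]
  have hi1 : IntegrableOn (fun t : ℝ => t ^ ((k:ℝ) - 1)) (Ioo 0 b) := by
    have := intervalIntegral.intervalIntegrable_rpow' (a := 0) (b := b) hexp
    exact ((intervalIntegrable_iff_integrableOn_Ioc_of_le hb.le).mp this).mono_set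
      Ioo_subset_Ioc_self
  have hme : Measurable fun t : ℝ => t ^ ((k:ℝ) - 1) * Real.exp (-t) :=
    (measurable_id.pow_const _).mul (measurable_id.neg.exp)
  have hi2 : IntegrableOn (fun t : ℝ => t ^ ((k:ℝ) - 1) * Real.exp (-t)) (Ioo 0 b) := by
    refine Integrable.mono hi1 hme.aestronglyMeasurable.restrict ?_
    refine (ae_restrict_iff' measurableSet_Ioo).mpr (ae_of_all _ fun t ht => ?_)
    have ht0 : 0 < t := ht.1
    rw [Real.norm_eq_abs, Real.norm_eq_abs, abs_of_nonneg (by positivity),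
      abs_of_nonneg (by positivity)]
    nlinarith [Real.exp_le_one_iff.mpr (neg_nonpos.mpr ht0.le) , Real.rpow_pos_of_pos ht0 ((k:ℝ)-1)]
  have hi3 : IntegrableOn (fun t : ℝ => Real.exp (-b) * (t ^ ((k:ℝ) - 1))) (Ioo 0 b) :=
    hi1.const_mul _
  -- rewrite the gamma measure as integral of the explicit density
  have hN : ((gammaMeasure k 1) (Ioo 0 b)).toReal
      = (∫ t in Ioo 0 b, t ^ ((k:ℝ) - 1) * Real.exp (-t)) / (Nat.factorial (k-1) : ℝ) := by
    rw [aux_gamma_int k hk hb,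
      setIntegral_congr_fun measurableSet_Ioo (fun t ht => aux_pdf_eq k hk ht.1.le)]
    rw [integral_div]
  have hfpos : (0:ℝ) < (Nat.factorial (k-1) : ℝ) := by positivity
  constructor
  · rw [hN]
    have hle : ∫ t in Ioo 0 b, Real.exp (-b) * (t ^ ((k:ℝ) - 1))
        ≤ ∫ t in Ioo 0 b, t ^ ((k:ℝ) - 1) * Real.exp (-t) := by
      refine setIntegral_mono_on hi3 hi2 measurableSet_Ioo fun t ht => ?_
      have := Real.exp_le_exp.mpr (neg_le_neg ht.2.le)
      nlinarith [Real.rpow_pos_of_pos ht.1 ((k:ℝ)-1)]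
    rw [integral_const_mul, hintpow] at hle
    have key : Real.exp (-b) * (b ^ (k:ℝ) / (Nat.factorial k : ℝ))
        = (Real.exp (-b) * (b ^ (k:ℝ) / (k:ℝ))) / (Nat.factorial (k-1):ℝ) := by
      rw [hfac]; field_simp; try ring
    rw [key]; gcongr
  · rw [hN]
    have hle : ∫ t in Ioo 0 b, t ^ ((k:ℝ) - 1) * Real.exp (-t)
        ≤ ∫ t in Ioo 0 b, t ^ ((k:ℝ) - 1) := by
      refine setIntegral_mono_on hi2 hi1 measurableSet_Ioo fun t ht => ?_
      nlinarith [Real.rpow_pos_of_pos ht.1 ((k:ℝ)-1),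
        Real.exp_le_one_iff.mpr (neg_nonpos.mpr ht.1.le)]
    rw [hintpow] at hle
    calc _ ≤ (b ^ (k:ℝ) / (k:ℝ)) / (Nat.factorial (k-1):ℝ) := by gcongr
      _ = b ^ (k:ℝ) / (Nat.factorial k : ℝ) := by rw [hfac]; field_simp; try ring

-- Step 4: event identification
lemma aux_event {γ : ℝ} (hγ : 0 < γ) {x : ℝ} (hx : 0 < x) (t : ℝ) :
    (x < (2:ℝ) ^ Int.fract (Real.logb 2 (t / γ)) / t)
      ↔ (0 < t ∧ t < γ * (2:ℝ) ^ (-(⌊Real.logb 2 (γ * x)⌋ : ℝ))) := by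
  have h2 : (1:ℝ) < 2 := one_lt_two
  rcases le_or_gt t 0 with ht | ht
  · constructor
    · intro h
      exfalso
      rcases ht.lt_or_eq with ht' | rfl
      · have hneg : (2:ℝ) ^ Int.fract (Real.logb 2 (t / γ)) / t < 0 :=
          div_neg_of_pos_of_neg (Real.rpow_pos_of_pos two_pos _) ht'
        linarith
      · rw [div_zero] at h; linarith
    · rintro ⟨h1, -⟩; linarith
  · have htγ : 0 < t / γ := div_pos ht hγ
    have hγx : 0 < γ * x := mul_pos hγ hx
    set u := Real.logb 2 (t / γ) with hu
    set s := Real.logb 2 (γ * x) with hs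
    have hfr : (2:ℝ) ^ Int.fract u / t = (2:ℝ) ^ (-(⌊u⌋:ℝ)) / γ := by
      have hp : (0:ℝ) < (2:ℝ) ^ ((⌊u⌋:ℤ):ℝ) := Real.rpow_pos_of_pos two_pos _
      rw [Int.fract, Real.rpow_sub two_pos, Real.rpow_logb two_pos (by norm_num) htγ,
        Real.rpow_neg (le_of_lt two_pos)]
      field_simp
    rw [hfr]
    constructor
    · intro h
      refine ⟨ht, ?_⟩
      have h1 : γ * x < (2:ℝ) ^ (-(⌊u⌋:ℝ)) := by
        rw [lt_div_iff₀ hγ] at h; linarith [mul_comm γ x]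
      have h2' : s < ((-⌊u⌋ : ℤ) : ℝ) := by
        rw [hs, Real.logb_lt_iff_lt_rpow h2 hγx]; push_cast; exact h1
      have h3 : ⌊s⌋ < -⌊u⌋ := Int.floor_lt.mpr h2'
      have h4 : ⌊u⌋ < -⌊s⌋ := by omega
      have h5 : u < ((-⌊s⌋ : ℤ) : ℝ) := Int.floor_lt.mp (by exact_mod_cast h4)
      have h6 : t / γ < (2:ℝ) ^ (-(⌊s⌋:ℝ)) := by
        rw [hu, Real.logb_lt_iff_lt_rpow h2 htγ] at h5
        push_cast at h5 ⊢; exact h5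
      rw [div_lt_iff₀ hγ] at h6; linarith [mul_comm γ ((2:ℝ) ^ (-(⌊s⌋:ℝ)))]
    · rintro ⟨-, h⟩
      have h6 : t / γ < (2:ℝ) ^ (-(⌊s⌋:ℝ)) := by
        rw [div_lt_iff₀ hγ]; linarith [mul_comm ((2:ℝ) ^ (-(⌊s⌋:ℝ))) γ]
      have h5 : u < ((-⌊s⌋ : ℤ) : ℝ) := by
        rw [hu, Real.logb_lt_iff_lt_rpow h2 htγ]; push_cast; exact h6
      have h4 : ⌊u⌋ < -⌊s⌋ := Int.floor_lt.mpr (by exact_mod_cast h5)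
      have h3 : ⌊s⌋ < -⌊u⌋ := by omega
      have h2' : s < ((-⌊u⌋ : ℤ) : ℝ) := Int.floor_lt.mp (by exact_mod_cast h3)
      have h1 : γ * x < (2:ℝ) ^ (-(⌊u⌋:ℝ)) := by
        rw [hs, Real.logb_lt_iff_lt_rpow h2 hγx] at h2'
        push_cast at h2' ⊢; exact h2'
      rw [lt_div_iff₀ hγ]; linarith [mul_comm x γ]

lemma aux_b_eq {γ x : ℝ} (hγ : 0 < γ) (hx : 0 < x) :
    γ * (2:ℝ) ^ (-(⌊Real.logb 2 (γ * x)⌋:ℝ))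
      = (2:ℝ) ^ Int.fract (Real.logb 2 (γ * x)) / x := by
  have hγx : 0 < γ * x := mul_pos hγ hx
  rw [Int.fract, Real.rpow_sub two_pos, Real.rpow_logb two_pos (by norm_num) hγx,
    Real.rpow_neg (le_of_lt two_pos)]
  have hp : (0:ℝ) < (2:ℝ) ^ ((⌊Real.logb 2 (γ * x)⌋:ℤ):ℝ) := Real.rpow_pos_of_pos two_pos _
  field_simp

lemma aux_den (k : ℕ) {γ x : ℝ} (hγ : 0 < γ) (hx : 0 < x) :
    (1 / (Nat.factorial k : ℝ)) * (2:ℝ) ^ ((k:ℝ) * Int.fract (Real.logb 2 (γ * x)))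
        * x ^ (-(k:ℝ))
      = (γ * (2:ℝ) ^ (-(⌊Real.logb 2 (γ * x)⌋:ℝ))) ^ (k:ℝ) / (Nat.factorial k : ℝ) := by
  have hfr : (0:ℝ) < (2:ℝ) ^ Int.fract (Real.logb 2 (γ * x)) := Real.rpow_pos_of_pos two_pos _
  have e1 : (2:ℝ) ^ ((k:ℝ) * Int.fract (Real.logb 2 (γ * x)))
      = ((2:ℝ) ^ Int.fract (Real.logb 2 (γ * x))) ^ (k:ℝ) := by
    rw [mul_comm, Real.rpow_mul (by norm_num : (0:ℝ) ≤ 2)]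
  have e2 : x ^ (-(k:ℝ)) = (x ^ (k:ℝ))⁻¹ := Real.rpow_neg hx.le _
  have e3 : (γ * (2:ℝ) ^ (-(⌊Real.logb 2 (γ * x)⌋:ℝ))) ^ (k:ℝ)
      = ((2:ℝ) ^ Int.fract (Real.logb 2 (γ * x))) ^ (k:ℝ) / x ^ (k:ℝ) := by
    rw [aux_b_eq hγ hx, Real.div_rpow hfr.le hx.le]
  have hxk : (0:ℝ) < x ^ (k:ℝ) := Real.rpow_pos_of_pos hx _
  have hF : (0:ℝ) < (Nat.factorial k : ℝ) := by positivity
  rw [e1, e2, e3]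
  field_simp

theorem stmt_15 {Ω : Type*} [MeasurableSpace Ω] (μ : Measure Ω) [IsProbabilityMeasure μ]
    (k : ℕ) (hk : 1 ≤ k) (γ : ℝ) (hγ : 0 < γ)
    (Z : Ω → ℝ) (hm : Measurable Z)
    (hd : μ.map Z = gammaMeasure k 1) :
    Tendsto (fun x : ℝ =>
        (μ {ω | x < (2 : ℝ) ^ Int.fract (Real.logb 2 (Z ω / γ)) / Z ω}).toReal /
          ((1 / (Nat.factorial k : ℝ)) *
            (2 : ℝ) ^ ((k : ℝ) * Int.fract (Real.logb 2 (γ * x))) * x ^ (-(k : ℝ))))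
      atTop (𝓝 1) := by
  set b : ℝ → ℝ := fun x => γ * (2:ℝ) ^ (-(⌊Real.logb 2 (γ * x)⌋:ℝ)) with hbdef
  have hb_pos : ∀ x : ℝ, 0 < b x := fun x => mul_pos hγ (Real.rpow_pos_of_pos two_pos _)
  have hb_le : ∀ x : ℝ, 0 < x → b x ≤ 2 / x := by
    intro x hx
    rw [hbdef]
    simp only
    rw [aux_b_eq hγ hx]
    gcongr
    calc (2:ℝ) ^ Int.fract (Real.logb 2 (γ * x)) ≤ (2:ℝ) ^ (1:ℝ) :=
      Real.rpow_le_rpow_of_exponent_le one_le_two (Int.fract_lt_one _).le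
    _ = 2 := Real.rpow_one 2
  have hb_tend : Tendsto b atTop (𝓝 0) := by
    refine squeeze_zero' ?_ ?_
      ((tendsto_const_nhds (x := (2:ℝ))).div_atTop (tendsto_id (α := ℝ)))
    · filter_upwards with x using (hb_pos x).le
    · filter_upwards [eventually_gt_atTop 0] with x hx using hb_le x hx
  have hexp_tend : Tendsto (fun x => Real.exp (-(b x))) atTop (𝓝 1) := by
    have := (Real.continuous_exp.tendsto 0).comp (by simpa using hb_tend.neg)
    simpa [Function.comp_def] using this
  refine tendsto_of_tendsto_of_tendsto_of_le_of_le' hexp_tend tendsto_const_nhds ?_ ?_ <;>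
    filter_upwards [eventually_gt_atTop 0] with x hx
  all_goals {
    have hbx : 0 < b x := hb_pos x
    have hbounds := aux_bounds k hk hbx
    have hevent : μ {ω | x < (2 : ℝ) ^ Int.fract (Real.logb 2 (Z ω / γ)) / Z ω}
        = gammaMeasure k 1 (Set.Ioo 0 (b x)) := by
      have hset : {ω | x < (2 : ℝ) ^ Int.fract (Real.logb 2 (Z ω / γ)) / Z ω}
          = Z ⁻¹' (Set.Ioo 0 (b x)) := by
        ext ω
        simpa [Set.mem_preimage, Set.mem_Ioo] using aux_event hγ hx (Z ω)
      rw [hset, ← Measure.map_apply hm measurableSet_Ioo, hd]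
    have hD : (0:ℝ) < (b x) ^ (k:ℝ) / (Nat.factorial k : ℝ) := by
      have := Real.rpow_pos_of_pos hbx (k:ℝ)
      positivity
    rw [hevent, aux_den k hγ hx]
    first
    | exact (le_div_iff₀ hD).mpr hbounds.1
    | exact (div_le_one hD).mpr hbounds.2
  }
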